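/- Let f = σ_L ∘ T_L ∘ σ_{L−1} ∘ ⋯ ∘ σ_1 ∘ T_1 be a feed-forward network, where each T_i : ℝ^{n_{i−1}} → ℝ^{n_i} is the linear map T_i(z) = W_i z for a matrix W_i, each σ_i : ℝ^{n_i} → ℝ^{n_i} is continuous, and cond(T_i) < ∞ and cond(σ_i) < ∞ for every i = 1, …, L. Then cond(f) ≤ (∏_{i=1}^L cond(σ_i)) · (∏_{i=1}^L cond(T_i)). -/

import Mathlib

open scoped ENNReal NNReal

/-- Relative error ratio `R(f,x;δ) = (‖f(x+δ)−f(x)‖/‖f(x)‖) / (‖δ‖/‖x‖)`,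
with values in `[0,∞]`. -/
noncomputable def relErrRatio {X Y : Type*} [NormedAddCommGroup X] [NormedAddCommGroup Y]
    (f : X → Y) (x δ : X) : ℝ≥0∞ :=
  ((‖f (x + δ) - f x‖₊ : ℝ≥0∞) / (‖f x‖₊ : ℝ≥0∞)) / ((‖δ‖₊ : ℝ≥0∞) / (‖x‖₊ : ℝ≥0∞))

/-- Local condition number `cond(f;x)`. -/
noncomputable def condAt {X Y : Type*} [NormedAddCommGroup X] [NormedAddCommGroup Y]
    (f : X → Y) (x : X) : ℝ≥0∞ :=
  ⨅ (ε : ℝ) (_ : 0 < ε), ⨆ (δ : X) (_ : δ ≠ 0) (_ : ‖δ‖ ≤ ε * ‖x‖), relErrRatio f x δ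

/-- Global condition number `cond(f)`. -/
noncomputable def condGlobal {X Y : Type*} [NormedAddCommGroup X] [NormedAddCommGroup Y]
    (f : X → Y) : ℝ≥0∞ :=
  ⨆ (x : X) (_ : x ≠ 0), condAt f x

/-- The composition `layer (L-1) ∘ ⋯ ∘ layer 0` of the first `L` layers of a feed-forward
network whose `i`-th layer maps `ℝ^{n i}` to `ℝ^{n (i+1)}`. -/
noncomputable def netComp (n : ℕ → ℕ)
    (layer : ∀ i : ℕ, EuclideanSpace ℝ (Fin (n i)) → EuclideanSpace ℝ (Fin (n (i + 1)))) :
    (L : ℕ) → EuclideanSpace ℝ (Fin (n 0)) → EuclideanSpace ℝ (Fin (n L))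
  | 0 => id
  | L + 1 => layer L ∘ netComp n layer L

section Aux

variable {X Y Z : Type*} [NormedAddCommGroup X] [NormedAddCommGroup Y] [NormedAddCommGroup Z]

lemma condAt_le_condGlobal (f : X → Y) {x : X} (hx : x ≠ 0) : condAt f x ≤ condGlobal f :=
  le_iSup_of_le x (le_iSup_of_le hx le_rfl)

/-- ENNReal arithmetic helper. -/
lemma aux_le_mul_of_forall_lt {x g f : ℝ≥0∞} (hg : g ≠ ⊤) (hf : f ≠ ⊤)
    (h : ∀ a b : ℝ≥0∞, g < a → f < b → x ≤ a * b) : x ≤ g * f := by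
  lift g to ℝ≥0 using hg
  lift f to ℝ≥0 using hf
  refine ENNReal.le_of_forall_pos_le_add fun ε hε _ => ?_
  set s : ℝ≥0 := g + f + 1 with hs
  have hs0 : s ≠ 0 := by
    intro h0
    have : (1 : ℝ≥0) ≤ s := le_add_self
    simp [h0] at this
  set η : ℝ≥0 := min 1 (ε / s) with hη
  have hη0 : 0 < η := lt_min one_pos (div_pos hε (pos_iff_ne_zero.mpr hs0))
  have key := h (↑(g + η)) (↑(f + η))
    (by exact_mod_cast ENNReal.coe_lt_coe.mpr (lt_add_of_pos_right g hη0))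
    (by exact_mod_cast ENNReal.coe_lt_coe.mpr (lt_add_of_pos_right f hη0))
  have main : (g + η) * (f + η) ≤ g * f + ε := by
    have h1 : η ≤ 1 := min_le_left _ _
    have h2 : η ≤ ε / s := min_le_right _ _
    have h2' : η * s ≤ ε := by
      calc η * s ≤ ε / s * s := mul_le_mul_left h2 s
        _ = ε := div_mul_cancel₀ _ hs0
    calc (g + η) * (f + η) = g * f + η * (g + f + η) := by ring
      _ ≤ g * f + η * s := by
          exact add_le_add_right (mul_le_mul_right (add_le_add_right h1 _) η) _
      _ ≤ g * f + ε := add_le_add_right h2' _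
  calc x ≤ (↑(g + η) : ℝ≥0∞) * ↑(f + η) := key
    _ = ↑((g + η) * (f + η)) := by push_cast; ring
    _ ≤ ↑(g * f + ε) := ENNReal.coe_le_coe.mpr main
    _ = ↑g * ↑f + ↑ε := by push_cast; ring

lemma relErrRatio_comp (f : X → Y) (g : Y → Z) (x δ : X)
    (hfx : f x ≠ 0) (hΔ : f (x + δ) - f x ≠ 0) :
    relErrRatio (g ∘ f) x δ = relErrRatio g (f x) (f (x + δ) - f x) * relErrRatio f x δ := by
  have hrw : f x + (f (x + δ) - f x) = f (x + δ) := by abel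
  set u : ℝ≥0∞ := (‖g (f (x + δ)) - g (f x)‖₊ : ℝ≥0∞) / (‖g (f x)‖₊ : ℝ≥0∞) with hu
  set v : ℝ≥0∞ := (‖f (x + δ) - f x‖₊ : ℝ≥0∞) / (‖f x‖₊ : ℝ≥0∞) with hv
  set w : ℝ≥0∞ := (‖δ‖₊ : ℝ≥0∞) / (‖x‖₊ : ℝ≥0∞) with hw
  have hv0 : v ≠ 0 := by
    rw [hv]
    exact (ENNReal.div_pos (by simpa using hΔ) (by simp)).ne'
  have hvtop : v ≠ ⊤ := by
    rw [hv]
    exact (ENNReal.div_lt_top (by simp) (by simpa using hfx)).ne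
  have : relErrRatio (g ∘ f) x δ = u / w := by
    rw [relErrRatio]; rfl
  rw [this, relErrRatio, relErrRatio, hrw]
  show u / w = u / v * (v / w)
  rw [div_eq_mul_inv u v, div_eq_mul_inv v w, div_eq_mul_inv u w]
  calc u * w⁻¹ = u * (v⁻¹ * v) * w⁻¹ := by
        rw [ENNReal.inv_mul_cancel hv0 hvtop, mul_one]
    _ = u * v⁻¹ * (v * w⁻¹) := by ring

/-- If `f x = 0` and `condAt f x` is finite, then `f` vanishes near `x`, so any
composition `g ∘ f` has zero local condition number at `x`. -/
lemma condAt_comp_of_eq_zero (f : X → Y) (g : Y → Z) {x : X} (hx : x ≠ 0)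
    (hfx : f x = 0) (hF : condAt f x ≠ ⊤) : condAt (g ∘ f) x = 0 := by
  have : condAt f x < ⊤ := lt_top_iff_ne_top.mpr hF
  rw [condAt] at this
  rw [iInf_lt_iff] at this
  obtain ⟨ε, hlt⟩ := this
  rw [iInf_lt_iff] at hlt
  obtain ⟨hε, hlt⟩ := hlt
  -- f vanishes on the ball of radius ε‖x‖
  have hvan : ∀ δ : X, δ ≠ 0 → ‖δ‖ ≤ ε * ‖x‖ → f (x + δ) = 0 := by
    intro δ hδ hδle
    by_contra hne
    have hmem : relErrRatio f x δ ≤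
        ⨆ (δ : X) (_ : δ ≠ 0) (_ : ‖δ‖ ≤ ε * ‖x‖), relErrRatio f x δ :=
      le_iSup_of_le δ (le_iSup_of_le hδ (le_iSup_of_le hδle le_rfl))
    have htop : relErrRatio f x δ = ⊤ := by
      rw [relErrRatio, hfx]
      have h1 : (‖f (x + δ) - 0‖₊ : ℝ≥0∞) / (‖(0 : Y)‖₊ : ℝ≥0∞) = ⊤ := by
        rw [show ((‖(0 : Y)‖₊ : ℝ≥0∞)) = 0 by simp]
        exact ENNReal.div_zero (by simpa [sub_eq_zero] using hne)
      rw [h1]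
      exact ENNReal.top_div_of_lt_top
        (ENNReal.div_lt_top (by simp) (by simpa using hx))
    rw [htop] at hmem
    exact absurd (top_le_iff.mp hmem) hlt.ne_top
  apply le_antisymm _ zero_le
  refine le_trans (iInf₂_le ε hε) ?_
  refine iSup_le fun δ => iSup_le fun hδ => iSup_le fun hδle => ?_
  have h1 : f (x + δ) = 0 := hvan δ hδ hδle
  rw [relErrRatio]
  simp [Function.comp, h1, hfx]

lemma condAt_comp_le (f : X → Y) (g : Y → Z) (hf : Continuous f) {x : X} (hx : x ≠ 0)
    (hfx : f x ≠ 0) (hF : condAt f x ≠ ⊤) (hG : condAt g (f x) ≠ ⊤) :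
    condAt (g ∘ f) x ≤ condAt g (f x) * condAt f x := by
  refine aux_le_mul_of_forall_lt hG hF fun a b ha hb => ?_
  -- get ε₁ for g
  rw [condAt, iInf_lt_iff] at ha
  obtain ⟨ε₁, ha⟩ := ha
  rw [iInf_lt_iff] at ha
  obtain ⟨hε₁, hSg⟩ := ha
  -- get ε₂ for f
  rw [condAt, iInf_lt_iff] at hb
  obtain ⟨ε₂, hb⟩ := hb
  rw [iInf_lt_iff] at hb
  obtain ⟨hε₂, hSf⟩ := hb
  -- continuity: choose ε₃
  have hxnorm : 0 < ‖x‖ := norm_pos_iff.mpr hx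
  have hfxnorm : 0 < ‖f x‖ := norm_pos_iff.mpr hfx
  obtain ⟨d, hd, hcont⟩ := Metric.continuousAt_iff.mp hf.continuousAt (ε₁ * ‖f x‖)
    (mul_pos hε₁ hfxnorm)
  set ε₃ : ℝ := d / (2 * ‖x‖) with hε₃def
  have hε₃ : 0 < ε₃ := div_pos hd (by positivity)
  have hcont' : ∀ δ : X, ‖δ‖ ≤ ε₃ * ‖x‖ → ‖f (x + δ) - f x‖ ≤ ε₁ * ‖f x‖ := by
    intro δ hδ
    have h1 : ε₃ * ‖x‖ = d / 2 := by
      rw [hε₃def]; field_simp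
    have h2 : dist (x + δ) x < d := by
      rw [dist_eq_norm]
      have : x + δ - x = δ := by abel
      rw [this]
      calc ‖δ‖ ≤ d / 2 := h1 ▸ hδ
        _ < d := by linarith
    have := hcont h2
    rw [dist_eq_norm] at this
    exact this.le
  set ε : ℝ := min ε₂ ε₃ with hεdef
  have hε : 0 < ε := lt_min hε₂ hε₃
  refine le_trans (iInf₂_le ε hε) ?_
  refine iSup_le fun δ => iSup_le fun hδ => iSup_le fun hδle => ?_
  set Δ : Y := f (x + δ) - f x with hΔdef
  by_cases hΔ : Δ = 0
  · -- f(x+δ) = f x, so the ratio is zero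
    have h1 : f (x + δ) = f x := by rwa [← sub_eq_zero]
    rw [relErrRatio]
    simp [Function.comp, h1]
  · rw [relErrRatio_comp f g x δ hfx hΔ]
    have hbd1 : relErrRatio g (f x) Δ ≤ a := by
      refine le_trans ?_ hSg.le
      refine le_iSup_of_le Δ (le_iSup_of_le hΔ (le_iSup_of_le ?_ le_rfl))
      exact hcont' δ (le_trans hδle (mul_le_mul_of_nonneg_right (min_le_right _ _) hxnorm.le))
    have hbd2 : relErrRatio f x δ ≤ b := by
      refine le_trans ?_ hSf.le
      refine le_iSup_of_le δ (le_iSup_of_le hδ (le_iSup_of_le ?_ le_rfl))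
      exact le_trans hδle (mul_le_mul_of_nonneg_right (min_le_left _ _) hxnorm.le)
    exact mul_le_mul' hbd1 hbd2

lemma condGlobal_comp_le (f : X → Y) (g : Y → Z) (hf : Continuous f)
    (hF : condGlobal f < ⊤) (hG : condGlobal g < ⊤) :
    condGlobal (g ∘ f) ≤ condGlobal g * condGlobal f := by
  refine iSup_le fun x => iSup_le fun hx => ?_
  have hFx : condAt f x ≠ ⊤ := ((condAt_le_condGlobal f hx).trans_lt hF).ne
  by_cases hfx : f x = 0
  · rw [condAt_comp_of_eq_zero f g hx hfx hFx]
    exact zero_le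
  · have hGx : condAt g (f x) ≠ ⊤ := ((condAt_le_condGlobal g hfx).trans_lt hG).ne
    calc condAt (g ∘ f) x ≤ condAt g (f x) * condAt f x :=
          condAt_comp_le f g hf hx hfx hFx hGx
      _ ≤ condGlobal g * condGlobal f :=
          mul_le_mul' (condAt_le_condGlobal g hfx) (condAt_le_condGlobal f hx)

lemma condGlobal_id_le : condGlobal (id : X → X) ≤ 1 := by
  refine iSup_le fun x => iSup_le fun hx => ?_
  refine le_trans (iInf₂_le 1 one_pos) ?_
  refine iSup_le fun δ => iSup_le fun hδ => iSup_le fun _ => ?_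
  rw [relErrRatio]
  simp only [id_eq, add_sub_cancel_left]
  exact ENNReal.div_self_le_one

lemma netComp_continuous (n : ℕ → ℕ)
    (layer : ∀ i : ℕ, EuclideanSpace ℝ (Fin (n i)) → EuclideanSpace ℝ (Fin (n (i + 1)))) :
    ∀ L : ℕ, (∀ i < L, Continuous (layer i)) → Continuous (netComp n layer L)
  | 0, _ => continuous_id
  | L + 1, h =>
    (h L (Nat.lt_succ_self L)).comp
      (netComp_continuous n layer L fun i hi => h i (hi.trans (Nat.lt_succ_self L)))

end Aux

theorem condGlobal_network_le (L : ℕ) (n : ℕ → ℕ)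
    (W : ∀ i : ℕ, Matrix (Fin (n (i + 1))) (Fin (n i)) ℝ)
    (σ : ∀ i : ℕ, EuclideanSpace ℝ (Fin (n (i + 1))) → EuclideanSpace ℝ (Fin (n (i + 1))))
    (T : ∀ i : ℕ, EuclideanSpace ℝ (Fin (n i)) → EuclideanSpace ℝ (Fin (n (i + 1))))
    (hT : ∀ i, T i = fun z => Matrix.toEuclideanLin (W i) z)
    (hσc : ∀ i < L, Continuous (σ i))
    (hσ : ∀ i < L, condGlobal (σ i) < ⊤)
    (hTcond : ∀ i < L, condGlobal (T i) < ⊤)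
    (f : EuclideanSpace ℝ (Fin (n 0)) → EuclideanSpace ℝ (Fin (n L)))
    (hf : f = netComp n (fun i => σ i ∘ T i) L) :
    condGlobal f ≤
      (∏ i ∈ Finset.range L, condGlobal (σ i)) * (∏ i ∈ Finset.range L, condGlobal (T i)) := by
  subst hf
  have hTc : ∀ i, Continuous (T i) := fun i => by
    rw [hT i]
    exact (Matrix.toEuclideanLin (W i)).continuous_of_finiteDimensional
  induction L with
  | zero => simpa [netComp] using condGlobal_id_le
  | succ L ih =>
    have hσc' : ∀ i < L, Continuous (σ i) := fun i hi => hσc i (hi.trans (Nat.lt_succ_self L))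
    have hσ' : ∀ i < L, condGlobal (σ i) < ⊤ := fun i hi => hσ i (hi.trans (Nat.lt_succ_self L))
    have hTcond' : ∀ i < L, condGlobal (T i) < ⊤ :=
      fun i hi => hTcond i (hi.trans (Nat.lt_succ_self L))
    have IH := ih hσc' hσ' hTcond'
    set f0 := netComp n (fun i => σ i ∘ T i) L with hf0
    have hf0c : Continuous f0 :=
      netComp_continuous n _ L fun i hi => (hσc' i hi).comp (hTc i)
    have hPlt : (∏ i ∈ Finset.range L, condGlobal (σ i)) *
        (∏ i ∈ Finset.range L, condGlobal (T i)) < ⊤ := by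
      apply ENNReal.mul_lt_top <;>
        exact ENNReal.prod_lt_top (fun i hi => by
          first
          | exact hσ' i (Finset.mem_range.mp hi)
          | exact hTcond' i (Finset.mem_range.mp hi))
    have hf0lt : condGlobal f0 < ⊤ := IH.trans_lt hPlt
    have h1 : condGlobal (T L ∘ f0) ≤ condGlobal (T L) * condGlobal f0 :=
      condGlobal_comp_le f0 (T L) hf0c hf0lt (hTcond L (Nat.lt_succ_self L))
    have h1lt : condGlobal (T L ∘ f0) < ⊤ :=
      h1.trans_lt (ENNReal.mul_lt_top (hTcond L (Nat.lt_succ_self L)) hf0lt)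
    have h2 : condGlobal (σ L ∘ (T L ∘ f0)) ≤ condGlobal (σ L) * condGlobal (T L ∘ f0) :=
      condGlobal_comp_le (T L ∘ f0) (σ L) ((hTc L).comp hf0c) h1lt (hσ L (Nat.lt_succ_self L))
    have heq : netComp n (fun i => σ i ∘ T i) (L + 1) = σ L ∘ (T L ∘ f0) := rfl
    rw [heq]
    calc condGlobal (σ L ∘ (T L ∘ f0))
        ≤ condGlobal (σ L) * condGlobal (T L ∘ f0) := h2
      _ ≤ condGlobal (σ L) * (condGlobal (T L) * condGlobal f0) :=
          mul_le_mul_right h1 _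
      _ ≤ condGlobal (σ L) * (condGlobal (T L) *
          ((∏ i ∈ Finset.range L, condGlobal (σ i)) *
           (∏ i ∈ Finset.range L, condGlobal (T i)))) :=
          mul_le_mul_right (mul_le_mul_right IH _) _
      _ = (∏ i ∈ Finset.range (L + 1), condGlobal (σ i)) *
          (∏ i ∈ Finset.range (L + 1), condGlobal (T i)) := by
          rw [Finset.prod_range_succ, Finset.prod_range_succ]; ring
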